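/- The linear discrete-time system (A) is P-uniformly exponentially dichotomic if and only if there exists a constant D > 0 such that for all natural numbers m ≥ n and all x ∈ X, the series Σ_{j=m}^{∞} ‖𝒜_P(j,n)x‖ converges and Σ_{j=m}^{∞} ‖𝒜_P(j,n)x‖ + Σ_{k=n}^{m} ‖𝒜_Q(k,n)x‖ ≤ D(‖𝒜_P(m,n)x‖ + ‖𝒜_Q(m,n)x‖). -/

import Mathlib

open Real

/-- The evolution operator started at time `n`, after `k` steps:
`A(n+k) ⋯ A(n+1)`. -/
noncomputable def evolFrom {X : Type*} [NormedAddCommGroup X] [NormedSpace ℝ X]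
    (A : ℕ → X →L[ℝ] X) (n : ℕ) : ℕ → X →L[ℝ] X
  | 0 => 1
  | k + 1 => (A (n + k + 1)).comp (evolFrom A n k)

/-- The evolution operator `𝒜(m,n) = A(m) ⋯ A(n+1)` for `m ≥ n`, `𝒜(n,n) = I`. -/
noncomputable def evol {X : Type*} [NormedAddCommGroup X] [NormedSpace ℝ X]
    (A : ℕ → X →L[ℝ] X) (m n : ℕ) : X →L[ℝ] X :=
  evolFrom A n (m - n)

/-- `𝒜_P(m,n) = 𝒜(m,n) P(n)`. -/
noncomputable def evolP {X : Type*} [NormedAddCommGroup X] [NormedSpace ℝ X]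
    (A P : ℕ → X →L[ℝ] X) (m n : ℕ) : X →L[ℝ] X :=
  (evol A m n).comp (P n)

/-- `𝒜_Q(m,n) = 𝒜(m,n) Q(n)` where `Q(n) = I - P(n)`. -/
noncomputable def evolQ {X : Type*} [NormedAddCommGroup X] [NormedSpace ℝ X]
    (A P : ℕ → X →L[ℝ] X) (m n : ℕ) : X →L[ℝ] X :=
  (evol A m n).comp (1 - P n)

/-- The system is P-uniformly exponentially dichotomic. -/
def IsUED {X : Type*} [NormedAddCommGroup X] [NormedSpace ℝ X]
    (A P : ℕ → X →L[ℝ] X) : Prop :=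
  ∃ N α : ℝ, 1 ≤ N ∧ 0 < α ∧
    ∀ m n : ℕ, n ≤ m → ∀ x : X,
      exp (α * ((m : ℝ) - n)) * (‖evolP A P m n x‖ + ‖(1 - P n) x‖) ≤
        N * (‖P n x‖ + ‖evolQ A P m n x‖)

section helpers
variable {X : Type*} [NormedAddCommGroup X] [NormedSpace ℝ X]
variable (A P : ℕ → X →L[ℝ] X)

lemma evol_self (n : ℕ) (x : X) : evol A n n x = x := by
  simp [evol, evolFrom]

lemma evol_succ {m n : ℕ} (h : n ≤ m) (x : X) :
    evol A (m+1) n x = A (m+1) (evol A m n x) := by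
  have h1 : m + 1 - n = (m - n) + 1 := by omega
  have h2 : n + (m - n) + 1 = m + 1 := by omega
  rw [evol, h1]
  simp only [evolFrom, h2]
  rfl

variable {A P}

lemma hP (hProj : ∀ n, (P n).comp (P n) = P n) 
(n : ℕ) (x : X) : P n (P n x) = P n x := by
  have := DFunLike.congr_fun (hProj n) x
  simpa using this

lemma hC (hCompat : ∀ n, (A (n + 1)).comp (P n) = (P (n + 1)).comp (A (n + 1))) (n : ℕ) (x : X) : A (n+1) (P n x) = P (n+1) (A (n+1) x) := by
  have := DFunLike.congr_fun (hCompat n) x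
  simpa using this

lemma P_evol (hCompat : ∀ n, (A (n + 1)).comp (P n) = (P (n + 1)).comp (A (n + 1))) {m n : ℕ} (h : n ≤ m) (x : X) :
    P m (evol A m n x) = evol A m n (P n x) := by
  induction m, h using Nat.le_induction with
  | base => simp [evol_self]
  | succ m hm ih =>
    rw [evol_succ A hm, evol_succ A hm, ← hC hCompat, ih]

lemma evol_evol {m' m n : ℕ} (h1 : n ≤ m) (h2 : m ≤ m') (x : X) :
    evol A m' m (evol A m n x) = evol A m' n x := by
  induction m', h2 using Nat.le_induction with
  | base => simp [evol_self]
  | succ m' hm ih =>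
    rw [evol_succ A hm, evol_succ A (h1.trans hm), ih]


variable (hProj : ∀ n, (P n).comp (P n) = P n)
variable (hCompat : ∀ n, (A (n + 1)).comp (P n) = (P (n + 1)).comp (A (n + 1)))

section algebra
include hProj

lemma evolP_P (m n : ℕ) (x : X) : evolP A P m n (P n x) = evolP A P m n x := by
  simp [evolP, hP hProj]

lemma evolQ_P (m n : ℕ) (x : X) : evolQ A P m n (P n x) = 0 := by
  have : (1 - P n) (P n x) = 0 := by simp [hP hProj]
  simp only [evolQ, ContinuousLinearMap.comp_apply, this, map_zero]

lemma evolP_Q (m n : ℕ) (x : X) : evolP A P m n ((1 - P n) x) = 0 := by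
  have : P n ((1 - P n) x) = 0 := by simp [hP hProj, map_sub]
  simp only [evolP, ContinuousLinearMap.comp_apply, this, map_zero]

lemma evolQ_Q (m n : ℕ) (x : X) : evolQ A P m n ((1 - P n) x) = evolQ A P m n x := by
  have : (1 - P n) ((1 - P n) x) = (1 - P n) x := by simp [map_sub, hP hProj]
  simp only [evolQ, ContinuousLinearMap.comp_apply, this, map_zero]

include hCompat

lemma P_evolP {m n : ℕ} (h : n ≤ m) (x : X) : P m (evolP A P m n x) = evolP A P m n x := by
  simp [evolP, P_evol hCompat h, hP hProj]

lemma Q_evolP {m n : ℕ} (h : n ≤ m) (x : X) : (1 - P m) (evolP A P m n x) = 0 := by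
  simp [P_evolP hProj hCompat h]

lemma P_evolQ {m n : ℕ} (h : n ≤ m) (x : X) : P m (evolQ A P m n x) = 0 := by
  have : P n ((1 - P n) x) = 0 := by simp [hP hProj, map_sub]
  simp only [evolQ, ContinuousLinearMap.comp_apply, P_evol hCompat h, this, map_zero]

lemma Q_evolQ {m n : ℕ} (h : n ≤ m) (x : X) : (1 - P m) (evolQ A P m n x) = evolQ A P m n x := by
  simp [P_evolQ hProj hCompat h]

lemma evolP_comp {m' m n : ℕ} (h1 : n ≤ m) (h2 : m ≤ m') (x : X) :
    evolP A P m' m (evolP A P m n x) = evolP A P m' n x := by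
  simp only [evolP, ContinuousLinearMap.comp_apply, P_evol hCompat h1, hP hProj,
    evol_evol h1 h2]

lemma evolQ_of_evolP {m' m n : ℕ} (h1 : n ≤ m) (h2 : m ≤ m') (x : X) :
    evolQ A P m' m (evolP A P m n x) = 0 := by
  have := Q_evolP hProj hCompat h1 x
  simp only [evolQ, ContinuousLinearMap.comp_apply, this, map_zero]

lemma evolP_of_evolQ {m' m n : ℕ} (h1 : n ≤ m) (h2 : m ≤ m') (x : X) :
    evolP A P m' m (evolQ A P m n x) = 0 := by
  have := P_evolQ hProj hCompat h1 x
  simp only [evolP, ContinuousLinearMap.comp_apply, this, map_zero]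

lemma evolQ_comp {m' m n : ℕ} (h1 : n ≤ m) (h2 : m ≤ m') (x : X) :
    evolQ A P m' m (evolQ A P m n x) = evolQ A P m' n x := by
  have := Q_evolQ hProj hCompat h1 x
  simp only [evolQ, ContinuousLinearMap.comp_apply] at this ⊢
  rw [this, evol_evol h1 h2]

lemma evolP_self (n : ℕ) (x : X) : evolP A P n n x = P n x := by
  simp [evolP, evol_self]

lemma evolQ_self (n : ℕ) (x : X) : evolQ A P n n x = (1 - P n) x := by
  simp [evolQ, evol_self]

end algebra
end helpers


/-- Corollary (second characterization of uniform exponential dichotomy). -/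
theorem uniform_exponential_dichotomy_iff_series
    {X : Type*} [NormedAddCommGroup X] [NormedSpace ℝ X] [CompleteSpace X]
    (A P : ℕ → X →L[ℝ] X)
    (hProj : ∀ n, (P n).comp (P n) = P n)
    (hCompat : ∀ n, (A (n + 1)).comp (P n) = (P (n + 1)).comp (A (n + 1))) :
    IsUED A P ↔
      ∃ D : ℝ, 0 < D ∧
        ∀ m n : ℕ, n ≤ m → ∀ x : X,
          Summable (fun j : ℕ => ‖evolP A P (m + j) n x‖) ∧
          (∑' j : ℕ, ‖evolP A P (m + j) n x‖) +
              ∑ k ∈ Finset.Icc n m, ‖evolQ A P k n x‖ ≤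
            D * (‖evolP A P m n x‖ + ‖evolQ A P m n x‖) := by
  constructor
  · rintro ⟨N, α, hN, hα, hineq⟩
    set q := exp (-α) with hqdef
    have hq0 : 0 < q := exp_pos _
    have hq1 : q < 1 := by
      rw [hqdef, exp_lt_one_iff]; linarith
    have h1q : 0 < 1 - q := by linarith
    refine ⟨N * (1 - q)⁻¹, by positivity, ?_⟩
    intro m n hnm x
    -- pointwise bounds
    have keyP : ∀ j : ℕ, ‖evolP A P (m + j) n x‖ ≤ N * q ^ j * ‖evolP A P m n x‖ := by
      intro j
      have h1 := hineq (m + j) m (Nat.le_add_right m j) (evolP A P m n x)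
      rw [evolP_comp hProj hCompat hnm (Nat.le_add_right m j),
          Q_evolP hProj hCompat hnm, P_evolP hProj hCompat hnm,
          evolQ_of_evolP hProj hCompat hnm (Nat.le_add_right m j)] at h1
      simp only [norm_zero, add_zero] at h1
      have hcast : ((m + j : ℕ) : ℝ) - (m : ℕ) = (j : ℝ) := by push_cast; ring
      rw [hcast] at h1
      have hqj : q ^ j = (exp (α * (j : ℝ)))⁻¹ := by
        rw [hqdef, ← Real.exp_nat_mul, ← Real.exp_neg]
        ring_nf
      have hEpos : (0:ℝ) < exp (α * (j : ℝ)) := exp_pos _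
      have hEinv : exp (α * (j : ℝ)) * (exp (α * (j : ℝ)))⁻¹ = 1 := mul_inv_cancel₀ hEpos.ne'
      rw [hqj]
      have h2 := mul_le_mul_of_nonneg_left h1 (inv_nonneg.mpr hEpos.le)
      rw [← mul_assoc, inv_mul_cancel₀ hEpos.ne', one_mul] at h2
      have h3 : N * (exp (α * (j : ℝ)))⁻¹ * ‖evolP A P m n x‖
          = (exp (α * (j : ℝ)))⁻¹ * (N * ‖evolP A P m n x‖) := by ring
      linarith
    have keyQ : ∀ k : ℕ, n ≤ k → k ≤ m →
        ‖evolQ A P k n x‖ ≤ N * q ^ (m - k) * ‖evolQ A P m n x‖ := by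
      intro k hnk hkm
      have h1 := hineq m k hkm (evolQ A P k n x)
      rw [evolP_of_evolQ hProj hCompat hnk hkm, Q_evolQ hProj hCompat hnk,
          P_evolQ hProj hCompat hnk, evolQ_comp hProj hCompat hnk hkm] at h1
      simp only [norm_zero, add_zero, zero_add] at h1
      have hcast : ((m : ℕ) : ℝ) - (k : ℕ) = ((m - k : ℕ) : ℝ) := by
        push_cast [Nat.cast_sub hkm]; ring
      rw [hcast] at h1
      have hqj : q ^ (m - k) = (exp (α * ((m - k : ℕ) : ℝ)))⁻¹ := by
        rw [hqdef, ← Real.exp_nat_mul, ← Real.exp_neg]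
        ring_nf
      have hEpos : (0:ℝ) < exp (α * ((m - k : ℕ) : ℝ)) := exp_pos _
      have hEinv : exp (α * ((m - k : ℕ) : ℝ)) * (exp (α * ((m - k : ℕ) : ℝ)))⁻¹ = 1 :=
        mul_inv_cancel₀ hEpos.ne'
      rw [hqj]
      have h2 := mul_le_mul_of_nonneg_left h1 (inv_nonneg.mpr hEpos.le)
      rw [← mul_assoc, inv_mul_cancel₀ hEpos.ne', one_mul] at h2
      have h3 : N * (exp (α * ((m - k : ℕ) : ℝ)))⁻¹ * ‖evolQ A P m n x‖
          = (exp (α * ((m - k : ℕ) : ℝ)))⁻¹ * (N * ‖evolQ A P m n x‖) := by ring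
      linarith
    have hgeo : Summable (fun j : ℕ => q ^ j) := summable_geometric_of_lt_one hq0.le hq1
    have hs : Summable (fun j : ℕ => N * q ^ j * ‖evolP A P m n x‖) := by
      simpa [mul_assoc] using (hgeo.mul_left N).mul_right ‖evolP A P m n x‖
    have hsum : Summable (fun j : ℕ => ‖evolP A P (m + j) n x‖) :=
      Summable.of_nonneg_of_le (fun _ => norm_nonneg _) keyP hs
    refine ⟨hsum, ?_⟩
    have htsum : (∑' j : ℕ, ‖evolP A P (m + j) n x‖) ≤
        N * (1 - q)⁻¹ * ‖evolP A P m n x‖ := by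
      calc (∑' j : ℕ, ‖evolP A P (m + j) n x‖)
          ≤ ∑' j : ℕ, N * q ^ j * ‖evolP A P m n x‖ := Summable.tsum_le_tsum keyP hsum hs
        _ = N * (∑' j : ℕ, q ^ j) * ‖evolP A P m n x‖ := by
            rw [tsum_mul_right, tsum_mul_left]
        _ = N * (1 - q)⁻¹ * ‖evolP A P m n x‖ := by
            rw [tsum_geometric_of_lt_one hq0.le hq1]
    have hgeomsum : ∑ k ∈ Finset.Icc n m, q ^ (m - k) ≤ (1 - q)⁻¹ := by
      have hinj : ∀ a ∈ Finset.Icc n m, ∀ b ∈ Finset.Icc n m,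
          m - a = m - b → a = b := by
        intro a ha b hb hab
        simp only [Finset.mem_Icc] at ha hb
        omega
      have him : ∑ i ∈ (Finset.Icc n m).image (fun k => m - k), q ^ i
          = ∑ k ∈ Finset.Icc n m, q ^ (m - k) := Finset.sum_image hinj
      rw [← him]
      calc ∑ i ∈ (Finset.Icc n m).image (fun k => m - k), q ^ i
          ≤ ∑' i : ℕ, q ^ i := Summable.sum_le_tsum _ (fun i _ => pow_nonneg hq0.le i) hgeo
        _ = (1 - q)⁻¹ := tsum_geometric_of_lt_one hq0.le hq1
    have hsumQ : ∑ k ∈ Finset.Icc n m, ‖evolQ A P k n x‖ ≤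
        N * (1 - q)⁻¹ * ‖evolQ A P m n x‖ := by
      calc ∑ k ∈ Finset.Icc n m, ‖evolQ A P k n x‖
          ≤ ∑ k ∈ Finset.Icc n m, N * q ^ (m - k) * ‖evolQ A P m n x‖ := by
            refine Finset.sum_le_sum fun k hk => ?_
            simp only [Finset.mem_Icc] at hk
            exact keyQ k hk.1 hk.2
        _ = N * (∑ k ∈ Finset.Icc n m, q ^ (m - k)) * ‖evolQ A P m n x‖ := by
            rw [Finset.mul_sum, Finset.sum_mul]
        _ ≤ N * (1 - q)⁻¹ * ‖evolQ A P m n x‖ := by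
            have hN0 : (0:ℝ) ≤ N := by linarith
            gcongr
    have : N * (1 - q)⁻¹ * (‖evolP A P m n x‖ + ‖evolQ A P m n x‖)
        = N * (1 - q)⁻¹ * ‖evolP A P m n x‖ + N * (1 - q)⁻¹ * ‖evolQ A P m n x‖ := by ring
    linarith
  · rintro ⟨D, hD, hser⟩
    obtain ⟨E, hEdef⟩ : ∃ E : ℝ, E = D + 2 := ⟨_, rfl⟩
    have hE2 : (2:ℝ) ≤ E := by linarith
    have hE0 : (0:ℝ) < E := by linarith
    have hserE : ∀ m n : ℕ, n ≤ m → ∀ x : X,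
        Summable (fun j : ℕ => ‖evolP A P (m + j) n x‖) ∧
        (∑' j : ℕ, ‖evolP A P (m + j) n x‖) +
            ∑ k ∈ Finset.Icc n m, ‖evolQ A P k n x‖ ≤
          E * (‖evolP A P m n x‖ + ‖evolQ A P m n x‖) := by
      intro m n h x
      obtain ⟨h1, h2⟩ := hser m n h x
      refine ⟨h1, h2.trans ?_⟩
      have hge : (0:ℝ) ≤ ‖evolP A P m n x‖ + ‖evolQ A P m n x‖ := by positivity
      exact mul_le_mul_of_nonneg_right (by linarith) hge
    obtain ⟨q, hqE⟩ : ∃ q : ℝ, q = 1 - 1/E := ⟨_, rfl⟩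
    have hinv1 : 1/E < 1 := by rw [div_lt_one hE0]; linarith
    have hinv0 : 0 < 1/E := by positivity
    have hq0 : 0 < q := by rw [hqE]; linarith
    have hq1 : q < 1 := by rw [hqE]; linarith
    -- P part
    have keyP : ∀ n m : ℕ, n ≤ m → ∀ x : X,
        ‖evolP A P m n x‖ ≤ E * q ^ (m - n) * ‖P n x‖ := by
      intro n m hnm x
      obtain ⟨S, hS⟩ : ∃ S : ℕ → ℝ, S = fun k => ∑' j : ℕ, ‖evolP A P (k + j) n x‖ :=
        ⟨_, rfl⟩
      have hsum : ∀ k, n ≤ k → Summable (fun j : ℕ => ‖evolP A P (k + j) n x‖) :=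
        fun k hk => (hserE k n hk x).1
      have hSnn : ∀ k, 0 ≤ S k := fun k => by
        rw [hS]; exact tsum_nonneg fun j => norm_nonneg _
      have hSD : ∀ k, n ≤ k → S k ≤ E * ‖evolP A P k n x‖ := by
        intro k hk
        obtain ⟨h1, h2⟩ := hserE k n hk (P n x)
        have e1 : (fun j : ℕ => ‖evolP A P (k + j) n (P n x)‖)
            = fun j : ℕ => ‖evolP A P (k + j) n x‖ := by
          funext j; rw [evolP_P hProj]
        have e2 : ∀ i ∈ Finset.Icc n k, ‖evolQ A P i n (P n x)‖ = 0 := by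
          intro i _; rw [evolQ_P hProj, norm_zero]
        rw [e1, Finset.sum_eq_zero e2, evolP_P hProj, evolQ_P hProj] at h2
        simp only [norm_zero, add_zero] at h2
        rw [hS]
        exact h2
      have hstep : ∀ k, n ≤ k → S k = ‖evolP A P k n x‖ + S (k + 1) := by
        intro k hk
        have h0 := Summable.tsum_eq_zero_add (hsum k hk)
        have h2k : S k = ∑' j : ℕ, ‖evolP A P (k + j) n x‖ := by rw [hS]
        have h2k1 : S (k + 1) = ∑' j : ℕ, ‖evolP A P (k + 1 + j) n x‖ := by rw [hS]
        rw [h2k, h2k1, h0, Nat.add_zero]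
        congr 1
        exact tsum_congr fun b => by rw [show k + (b + 1) = k + 1 + b from by omega]
      have hdecay : ∀ k, n ≤ k → S (k + 1) ≤ q * S k := by
        intro k hk
        have h1 := hSD k hk
        have h2 := hstep k hk
        have hu : S k / E ≤ ‖evolP A P k n x‖ := (div_le_iff₀ hE0).mpr (by linarith)
        have h3 : S k - S k / E = q * S k := by rw [hqE]; field_simp
        linarith
      have hiter : ∀ k, n ≤ k → S k ≤ q ^ (k - n) * S n := by
        intro k hk
        induction k, hk using Nat.le_induction with
        | base => simp
        | succ k hk ih =>
          have h3 : k + 1 - n = (k - n) + 1 := by omega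
          rw [h3, pow_succ]
          calc S (k + 1) ≤ q * S k := hdecay k hk
            _ ≤ q * (q ^ (k - n) * S n) := mul_le_mul_of_nonneg_left ih hq0.le
            _ = q ^ (k - n) * q * S n := by ring
      have huS : ‖evolP A P m n x‖ ≤ S m := by
        have := Summable.le_tsum (hsum m hnm) 0 fun j _ => norm_nonneg _
        rw [hS]
        simpa using this
      have hSn : S n ≤ E * ‖P n x‖ := by
        have := hSD n le_rfl
        rwa [evolP_self hProj hCompat] at this
      calc ‖evolP A P m n x‖ ≤ S m := huS
        _ ≤ q ^ (m - n) * S n := hiter m hnm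
        _ ≤ q ^ (m - n) * (E * ‖P n x‖) :=
            mul_le_mul_of_nonneg_left hSn (pow_nonneg hq0.le _)
        _ = E * q ^ (m - n) * ‖P n x‖ := by ring
    -- Q part
    have keyQ : ∀ n m : ℕ, n ≤ m → ∀ x : X,
        ‖(1 - P n) x‖ ≤ E * q ^ (m - n) * ‖evolQ A P m n x‖ := by
      intro n m hnm x
      obtain ⟨T, hT⟩ : ∃ T : ℕ → ℝ, T = fun k => ∑ i ∈ Finset.Icc n k, ‖evolQ A P i n x‖ :=
        ⟨_, rfl⟩
      have hTD : ∀ k, n ≤ k → T k ≤ E * ‖evolQ A P k n x‖ := by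
        intro k hk
        obtain ⟨h1, h2⟩ := hserE k n hk ((1 - P n) x)
        have e1 : (fun j : ℕ => ‖evolP A P (k + j) n ((1 - P n) x)‖)
            = fun j : ℕ => (0:ℝ) := by
          funext j; rw [evolP_Q hProj, norm_zero]
        have e2 : ∀ i ∈ Finset.Icc n k,
            ‖evolQ A P i n ((1 - P n) x)‖ = ‖evolQ A P i n x‖ := by
          intro i _; rw [evolQ_Q hProj]
        rw [e1, tsum_zero, Finset.sum_congr rfl e2, evolP_Q hProj, evolQ_Q hProj] at h2
        simp only [norm_zero, zero_add] at h2
        rw [hT]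
        exact h2
      have hstep : ∀ k, n ≤ k → T (k + 1) = T k + ‖evolQ A P (k + 1) n x‖ := by
        intro k hk
        rw [hT]
        simp only
        exact Finset.sum_Icc_succ_top (by omega) _
      have hdecay : ∀ k, n ≤ k → T k ≤ q * T (k + 1) := by
        intro k hk
        have h1 := hTD (k + 1) (by omega)
        have h2 := hstep k hk
        have hv : T (k + 1) / E ≤ ‖evolQ A P (k + 1) n x‖ := (div_le_iff₀ hE0).mpr (by linarith)
        have h3 : T (k + 1) - T (k + 1) / E = q * T (k + 1) := by rw [hqE]; field_simp
        linarith
      have hiter : ∀ k, n ≤ k → T n ≤ q ^ (k - n) * T k := by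
        intro k hk
        induction k, hk using Nat.le_induction with
        | base => simp
        | succ k hk ih =>
          have h3 : k + 1 - n = (k - n) + 1 := by omega
          rw [h3, pow_succ]
          calc T n ≤ q ^ (k - n) * T k := ih
            _ ≤ q ^ (k - n) * (q * T (k + 1)) :=
                mul_le_mul_of_nonneg_left (hdecay k hk) (pow_nonneg hq0.le _)
            _ = q ^ (k - n) * q * T (k + 1) := by ring
      have hTn : T n = ‖(1 - P n) x‖ := by
        rw [hT]
        simp only [Finset.Icc_self, Finset.sum_singleton, evolQ_self hProj hCompat]
      calc ‖(1 - P n) x‖ = T n := hTn.symm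
        _ ≤ q ^ (m - n) * T m := hiter m hnm
        _ ≤ q ^ (m - n) * (E * ‖evolQ A P m n x‖) :=
            mul_le_mul_of_nonneg_left (hTD m hnm) (pow_nonneg hq0.le _)
        _ = E * q ^ (m - n) * ‖evolQ A P m n x‖ := by ring
    -- assemble
    refine ⟨E, -Real.log q, by linarith, by nlinarith [Real.log_neg hq0 hq1], ?_⟩
    intro m n hnm x
    have hPb := keyP n m hnm x
    have hQb := keyQ n m hnm x
    have hqk : (0:ℝ) < q ^ (m - n) := pow_pos hq0 _
    have hexp : exp (-Real.log q * ((m : ℝ) - n)) = (q ^ (m - n))⁻¹ := by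
      have hcast : ((m : ℝ) - n) = ((m - n : ℕ) : ℝ) := by
        push_cast [Nat.cast_sub hnm]; ring
      rw [hcast, mul_comm, Real.exp_nat_mul, Real.exp_neg, Real.exp_log hq0, inv_pow]
    rw [hexp, inv_mul_le_iff₀ hqk]
    have hring : q ^ (m - n) * (E * (‖P n x‖ + ‖evolQ A P m n x‖))
        = E * q ^ (m - n) * ‖P n x‖ + E * q ^ (m - n) * ‖evolQ A P m n x‖ := by ring
    linarith
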